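/- Let {(u_h^n, p̃_h^n, q_h^n)}_{n≥1} satisfy the fully discrete gel scheme with q_h⁰ the L² projection of q₀ (so (q_h⁰, 1) = (q₀, 1) = C_q). Then for all n ≥ 0, (q_h^n, 1) = C_q; for all n ≥ 1, ⟨u_h^n, ν⟩_{∂Ω} = C_q; and for all n ≥ 1, (p̃_h^n, 1) = C_{p̃} := (β/d)C_q − (1/d)⟨f, x⟩, where the last identity is obtained by choosing v_h = x in the discrete Stokes equation (valid since x ∈ V_h for finite element spaces containing linear polynomials). -/
import Mathlib


open scoped RealInnerProductSpace

/-- discrete conservation laws for the fully discrete gel scheme.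
With `(q_h⁰, 1) = C_q`, one has `(q_h^n, 1) = C_q` for all `n ≥ 0`,
`⟨u_h^n, ν⟩_{∂Ω} = C_q` for all `n ≥ 1`, and
`(p̃_h^n, 1) = C_{p̃} := (β/d)C_q − (1/d)⟨f, x⟩` for all `n ≥ 1` (the latter by
testing with `v_h = x ∈ V_h`).  Here `oneM ∈ M_h = W_h` is the constant function `1`
(`gradM oneM = 0`, `emb oneM = c1`), `xvec ∈ V_h` the position field `x`
(`div x = d`, `(∇w, ∇x) = (div w, 1)`), and `bflux v = ⟨v, ν⟩_{∂Ω} = (div v, 1)` is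
the divergence theorem. -/
theorem gel_fully_discrete_conservation_laws
    {L2 Vh Mh GV GM : Type*}
    [NormedAddCommGroup L2] [InnerProductSpace ℝ L2]
    [NormedAddCommGroup Vh] [InnerProductSpace ℝ Vh]
    [NormedAddCommGroup Mh] [InnerProductSpace ℝ Mh]
    [NormedAddCommGroup GV] [InnerProductSpace ℝ GV]
    [NormedAddCommGroup GM] [InnerProductSpace ℝ GM]
    (d : ℕ) (hd : 0 < d) (α β κ Δt : ℝ)
    (hα : 0 < α) (hβ : 0 < β) (hκ : 0 < κ) (hΔt : 0 < Δt)
    (dvg : Vh →L[ℝ] L2) (gradV : Vh →L[ℝ] GV)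
    (emb : Mh →L[ℝ] L2) (gradM : Mh →L[ℝ] GM)
    (c1 : L2) (bflux : Vh →L[ℝ] ℝ) (f : Vh →L[ℝ] ℝ)
    (oneM : Mh) (honegrad : gradM oneM = 0) (honeemb : emb oneM = c1)
    (xvec : Vh) (hdivx : dvg xvec = (d : ℝ) • c1)
    (hgradx : ∀ w : Vh, ⟪gradV w, gradV xvec⟫ = ⟪dvg w, c1⟫)
    (hdivthm : ∀ v : Vh, bflux v = ⟪dvg v, c1⟫)
    (u : ℕ → Vh) (pt : ℕ → Mh) (q : ℕ → Mh)
    (heq1 : ∀ n : ℕ, ∀ vh : Vh,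
      β * ⟪gradV (u (n+1)), gradV vh⟫ - ⟪emb (pt (n+1)), dvg vh⟫ = f vh)
    (heq2 : ∀ n : ℕ, ∀ φh : Mh,
      ⟪dvg (u (n+1)), emb φh⟫ = ⟪emb (q n), emb φh⟫)
    (heq3 : ∀ n : ℕ, ∀ ψh : Mh,
      ⟪emb (Δt⁻¹ • (q (n+1) - q n)), emb ψh⟫
        + κ * ⟪gradM (α • q (n+1) + pt (n+1)), gradM ψh⟫ = 0)
    (Cq : ℝ) (hq0 : ⟪emb (q 0), c1⟫ = Cq) :
    (∀ n : ℕ, ⟪emb (q n), c1⟫ = Cq)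
    ∧ (∀ n : ℕ, bflux (u (n+1)) = Cq)
    ∧ (∀ n : ℕ, ⟪emb (pt (n+1)), c1⟫ = (β / d) * Cq - (1 / d) * f xvec) := by
  have hqc : ∀ n : ℕ, ⟪emb (q n), c1⟫ = Cq := by
    intro n
    induction n with
    | zero => exact hq0
    | succ n ih =>
      have h3 := heq3 n oneM
      rw [honegrad, inner_zero_right, mul_zero, add_zero, honeemb] at h3
      have h3' : ⟪emb (q (n+1) - q n), c1⟫ = 0 := by
        rw [map_smul, inner_smul_left] at h3
        have := mul_eq_zero.mp h3
        rcases this with h | h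
        · exact absurd h (inv_ne_zero hΔt.ne')
        · simpa using h
      rw [map_sub, inner_sub_left] at h3'
      linarith [ih]
  have hflux : ∀ n : ℕ, ⟪dvg (u (n+1)), c1⟫ = Cq := by
    intro n
    have := heq2 n oneM
    rw [honeemb] at this
    rw [this, hqc n]
  refine ⟨hqc, fun n => by rw [hdivthm, hflux], fun n => ?_⟩
  have h1 := heq1 n xvec
  rw [hgradx, hflux n, hdivx, inner_smul_right] at h1
  have hd' : (d : ℝ) ≠ 0 := Nat.cast_ne_zero.mpr hd.ne'
  field_simp
  linarith
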